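/- For the functions C_{2k}, C_{2k+1} of Theorem 2.2: the series C_{2k}(s,x;σ²) converges absolutely for every s ≥ 0, x ∈ ℝ, σ² > 0, and k ∈ ℕ_0. Specifically, the series Σ_{ℓ=k}^∞ (ℓ!/(2ℓ+1)!) r^{(2ℓ+1)/2} H_{2ℓ+1}(u) converges absolutely for every 0 < r < 1 and u ∈ ℝ, where H_n is the Hermite polynomial of degree n. -/

import Mathlib

open Real Finset

/-- The physicists' Hermite polynomial
`H_n(x) = n! Σ_{k=0}^{[n/2]} (-1)^k (2x)^{n-2k} / (k!(n-2k)!)`. -/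
noncomputable def hermiteH (n : ℕ) (x : ℝ) : ℝ :=
  (n.factorial : ℝ) *
    ∑ k ∈ Finset.range (n / 2 + 1),
      (-1 : ℝ) ^ k * (2 * x) ^ (n - 2 * k) /
        ((k.factorial : ℝ) * ((n - 2 * k).factorial : ℝ))

/-- Key estimate: `(ℓ!/(2ℓ+1)!) |H_{2ℓ+1}(u)| ≤ x * exp (2 √ℓ x)` for any `x ≥ 2|u|`. -/
lemma hermite_factor_bound (ℓ : ℕ) (u x : ℝ) (hx0 : 0 ≤ x) (hxu : 2 * |u| ≤ x) :
    (ℓ.factorial : ℝ) / ((2 * ℓ + 1).factorial : ℝ) * |hermiteH (2 * ℓ + 1) u|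
      ≤ x * Real.exp (2 * Real.sqrt ℓ * x) := by
  have hdiv : (2 * ℓ + 1) / 2 = ℓ := by omega
  have hfac : (0:ℝ) < ((2 * ℓ + 1).factorial : ℝ) := by positivity
  have h2u : |2 * u| ≤ x := by rw [abs_mul, abs_two]; exact hxu
  calc (ℓ.factorial : ℝ) / ((2 * ℓ + 1).factorial : ℝ) * |hermiteH (2 * ℓ + 1) u|
      = (ℓ.factorial : ℝ) *
          |∑ k ∈ Finset.range (ℓ + 1),
            (-1 : ℝ) ^ k * (2 * u) ^ (2 * ℓ + 1 - 2 * k) /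
              ((k.factorial : ℝ) * ((2 * ℓ + 1 - 2 * k).factorial : ℝ))| := by
        rw [hermiteH, hdiv, abs_mul, abs_of_nonneg hfac.le]
        field_simp
    _ ≤ (ℓ.factorial : ℝ) *
          ∑ k ∈ Finset.range (ℓ + 1),
            x ^ (2 * ℓ + 1 - 2 * k) /
              ((k.factorial : ℝ) * ((2 * ℓ + 1 - 2 * k).factorial : ℝ)) := by
        refine mul_le_mul_of_nonneg_left ?_ (by positivity)
        refine (Finset.abs_sum_le_sum_abs _ _).trans (Finset.sum_le_sum fun k _ => ?_)
        have hd : (0:ℝ) < (k.factorial : ℝ) * ((2 * ℓ + 1 - 2 * k).factorial : ℝ) := by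
          positivity
        calc |(-1 : ℝ) ^ k * (2 * u) ^ (2 * ℓ + 1 - 2 * k) /
                ((k.factorial : ℝ) * ((2 * ℓ + 1 - 2 * k).factorial : ℝ))|
            = |2 * u| ^ (2 * ℓ + 1 - 2 * k) /
                ((k.factorial : ℝ) * ((2 * ℓ + 1 - 2 * k).factorial : ℝ)) := by
              rw [abs_div, abs_mul, abs_pow, abs_pow, abs_neg, abs_one, one_pow, one_mul,
                abs_of_pos hd]
          _ ≤ x ^ (2 * ℓ + 1 - 2 * k) /
                ((k.factorial : ℝ) * ((2 * ℓ + 1 - 2 * k).factorial : ℝ)) := by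
              gcongr
    _ = ∑ j ∈ Finset.range (ℓ + 1),
          (ℓ.factorial : ℝ) * x ^ (2 * j + 1) /
            (((ℓ - j).factorial : ℝ) * ((2 * j + 1).factorial : ℝ)) := by
        rw [Finset.mul_sum, ← Finset.sum_range_reflect]
        refine Finset.sum_congr rfl fun j hj => ?_
        have hj' : j ≤ ℓ := Nat.lt_succ_iff.mp (Finset.mem_range.mp hj)
        have h1 : ℓ + 1 - 1 - j = ℓ - j := by omega
        have h2 : 2 * ℓ + 1 - 2 * (ℓ - j) = 2 * j + 1 := by omega
        rw [h1, h2]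
        ring
    _ ≤ ∑ j ∈ Finset.range (ℓ + 1), x * ((Real.sqrt ℓ * x) ^ j / (j.factorial : ℝ)) ^ 2 := by
        refine Finset.sum_le_sum fun j hj => ?_
        have hj' : j ≤ ℓ := Nat.lt_succ_iff.mp (Finset.mem_range.mp hj)
        have hfd : (ℓ.factorial : ℝ) = ((ℓ - j).factorial : ℝ) * (ℓ.descFactorial j : ℝ) := by
          exact_mod_cast (Nat.factorial_mul_descFactorial hj').symm
        have hnum : (ℓ.descFactorial j : ℝ) ≤ (ℓ : ℝ) ^ j := by
          exact_mod_cast Nat.descFactorial_le_pow ℓ j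
        have hden : (j.factorial : ℝ) * (j.factorial : ℝ) ≤ ((2 * j + 1).factorial : ℝ) := by
          have h1 : j.factorial * j.factorial ≤ (j + j).factorial :=
            Nat.le_of_dvd (Nat.factorial_pos _) (Nat.factorial_mul_factorial_dvd_factorial_add j j)
          have h2 : (j + j).factorial ≤ (2 * j + 1).factorial :=
            Nat.factorial_le (by omega)
          exact_mod_cast h1.trans h2
        have hsq : (Real.sqrt ℓ) ^ 2 = (ℓ : ℝ) := Real.sq_sqrt (Nat.cast_nonneg ℓ)
        have hrhs : x * ((Real.sqrt ℓ * x) ^ j / (j.factorial : ℝ)) ^ 2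
            = (ℓ : ℝ) ^ j * x ^ (2 * j + 1) / ((j.factorial : ℝ) * (j.factorial : ℝ)) := by
          have hsqj : (Real.sqrt ℓ ^ j) ^ 2 = (ℓ : ℝ) ^ j := by
            rw [← pow_mul, mul_comm, pow_mul, hsq]
          rw [div_pow, mul_pow, mul_pow, hsqj]
          field_simp
          ring
        rw [hrhs, hfd]
        have hlhs : ((ℓ - j).factorial : ℝ) * (ℓ.descFactorial j : ℝ) * x ^ (2 * j + 1) /
              (((ℓ - j).factorial : ℝ) * ((2 * j + 1).factorial : ℝ))
            = (ℓ.descFactorial j : ℝ) * x ^ (2 * j + 1) / ((2 * j + 1).factorial : ℝ) := by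
          field_simp
        rw [hlhs]
        refine div_le_div₀ (by positivity) ?_ (by positivity) hden
        exact mul_le_mul_of_nonneg_right hnum (by positivity)
    _ = x * ∑ j ∈ Finset.range (ℓ + 1), ((Real.sqrt ℓ * x) ^ j / (j.factorial : ℝ)) ^ 2 := by
        rw [Finset.mul_sum]
    _ ≤ x * (∑ j ∈ Finset.range (ℓ + 1), (Real.sqrt ℓ * x) ^ j / (j.factorial : ℝ)) ^ 2 := by
        refine mul_le_mul_of_nonneg_left ?_ hx0
        exact Finset.sum_sq_le_sq_sum_of_nonneg fun j _ => by positivity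
    _ ≤ x * (Real.exp (Real.sqrt ℓ * x)) ^ 2 := by
        refine mul_le_mul_of_nonneg_left ?_ hx0
        have hbase : 0 ≤ ∑ j ∈ Finset.range (ℓ + 1), (Real.sqrt ℓ * x) ^ j / (j.factorial : ℝ) :=
          Finset.sum_nonneg fun j _ => by positivity
        have hle := Real.sum_le_exp_of_nonneg (by positivity : (0:ℝ) ≤ Real.sqrt ℓ * x) (ℓ + 1)
        exact pow_le_pow_left₀ hbase hle 2
    _ = x * Real.exp (2 * Real.sqrt ℓ * x) := by
        rw [sq, ← Real.exp_add]; ring_nf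

/-- Absolute convergence of the series appearing in `C_{2k}`:
`Σ_{ℓ ≥ k} (ℓ!/(2ℓ+1)!) r^{(2ℓ+1)/2} H_{2ℓ+1}(u)` converges absolutely
for every `0 < r < 1` and `u ∈ ℝ`. -/
theorem hermite_series_abs_convergence (r u : ℝ) (hr0 : 0 < r) (hr1 : r < 1) :
    Summable (fun ℓ : ℕ =>
      |((ℓ.factorial : ℝ) / ((2 * ℓ + 1).factorial : ℝ)) *
        r ^ (((2 * ℓ + 1 : ℕ) : ℝ) / 2) * hermiteH (2 * ℓ + 1) u|) := by
  obtain ⟨s, hs0, hs1, hsr⟩ : ∃ s : ℝ, 0 < s ∧ s < 1 ∧ s ^ 2 = r :=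
    ⟨Real.sqrt r, Real.sqrt_pos.2 hr0, by simpa using Real.sqrt_lt_sqrt hr0.le hr1,
      Real.sq_sqrt hr0.le⟩
  obtain ⟨ε, hε, hexpε⟩ : ∃ ε : ℝ, 0 < ε ∧ Real.exp ε = s⁻¹ :=
    ⟨Real.log s⁻¹,
      Real.log_pos (by rw [← one_div]; exact (one_lt_div hs0).2 hs1),
      Real.exp_log (inv_pos.2 hs0)⟩
  obtain ⟨x, hx0, hxu⟩ : ∃ x : ℝ, 0 ≤ x ∧ 2 * |u| ≤ x := ⟨2 * |u|, by positivity, le_rfl⟩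
  have key : ∀ ℓ : ℕ,
      |((ℓ.factorial : ℝ) / ((2 * ℓ + 1).factorial : ℝ)) *
        r ^ (((2 * ℓ + 1 : ℕ) : ℝ) / 2) * hermiteH (2 * ℓ + 1) u|
        ≤ (x * s * Real.exp (x ^ 2 / ε)) * s ^ ℓ := by
    intro ℓ
    have hrpow : r ^ (((2 * ℓ + 1 : ℕ) : ℝ) / 2) = s ^ (2 * ℓ + 1) := by
      rw [← hsr, ← Real.rpow_natCast s 2, ← Real.rpow_mul hs0.le,
        ← Real.rpow_natCast s (2 * ℓ + 1)]
      congr 1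
      push_cast
      ring
    have hrpow_pos : (0:ℝ) ≤ r ^ (((2 * ℓ + 1 : ℕ) : ℝ) / 2) := Real.rpow_nonneg hr0.le _
    have habs :
        |((ℓ.factorial : ℝ) / ((2 * ℓ + 1).factorial : ℝ)) *
            r ^ (((2 * ℓ + 1 : ℕ) : ℝ) / 2) * hermiteH (2 * ℓ + 1) u|
          = ((ℓ.factorial : ℝ) / ((2 * ℓ + 1).factorial : ℝ)) *
              r ^ (((2 * ℓ + 1 : ℕ) : ℝ) / 2) * |hermiteH (2 * ℓ + 1) u| := by
      rw [abs_mul, abs_mul, abs_of_nonneg (by positivity), abs_of_nonneg hrpow_pos]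
    rw [habs, hrpow]
    have hH := hermite_factor_bound ℓ u x hx0 hxu
    have hsq : (Real.sqrt ℓ) ^ 2 = (ℓ : ℝ) := Real.sq_sqrt (Nat.cast_nonneg ℓ)
    have hexp2 : Real.exp (2 * Real.sqrt ℓ * x) ≤ Real.exp (x ^ 2 / ε) * Real.exp (ε * ℓ) := by
      rw [← Real.exp_add]
      apply Real.exp_le_exp.2
      have heq : x ^ 2 - 2 * ε * x * Real.sqrt ℓ + ε ^ 2 * (ℓ : ℝ)
          = (x - ε * Real.sqrt ℓ) ^ 2 := by
        linear_combination (-(ε ^ 2)) * hsq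
      have h1 : 0 ≤ x ^ 2 - 2 * ε * x * Real.sqrt ℓ + ε ^ 2 * (ℓ : ℝ) :=
        heq ▸ sq_nonneg _
      rw [div_add' _ _ _ hε.ne', le_div_iff₀ hε]
      nlinarith [h1]
    have hei : Real.exp (ε * ℓ) = (s⁻¹) ^ ℓ := by
      rw [mul_comm, Real.exp_nat_mul, hexpε]
    have hinv : s ^ ℓ * (s⁻¹) ^ ℓ = 1 := by
      rw [← mul_pow, mul_inv_cancel₀ hs0.ne', one_pow]
    calc ((ℓ.factorial : ℝ) / ((2 * ℓ + 1).factorial : ℝ)) * s ^ (2 * ℓ + 1) *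
          |hermiteH (2 * ℓ + 1) u|
        ≤ s ^ (2 * ℓ + 1) * (x * Real.exp (2 * Real.sqrt ℓ * x)) := by
          have h := mul_le_mul_of_nonneg_left hH (by positivity : (0:ℝ) ≤ s ^ (2 * ℓ + 1))
          calc ((ℓ.factorial : ℝ) / ((2 * ℓ + 1).factorial : ℝ)) * s ^ (2 * ℓ + 1) *
                |hermiteH (2 * ℓ + 1) u|
              = s ^ (2 * ℓ + 1) *
                  (((ℓ.factorial : ℝ) / ((2 * ℓ + 1).factorial : ℝ)) *
                    |hermiteH (2 * ℓ + 1) u|) := by ring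
            _ ≤ _ := h
      _ ≤ s ^ (2 * ℓ + 1) * (x * (Real.exp (x ^ 2 / ε) * Real.exp (ε * ℓ))) := by
          refine mul_le_mul_of_nonneg_left ?_ (by positivity)
          exact mul_le_mul_of_nonneg_left hexp2 hx0
      _ = (x * s * Real.exp (x ^ 2 / ε)) * s ^ ℓ := by
          rw [hei]
          have h2 : s ^ (2 * ℓ + 1) = s ^ ℓ * s ^ ℓ * s := by
            rw [show 2 * ℓ + 1 = ℓ + ℓ + 1 by ring, pow_succ, pow_add]
          calc s ^ (2 * ℓ + 1) * (x * (Real.exp (x ^ 2 / ε) * (s⁻¹) ^ ℓ))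
              = (x * s * Real.exp (x ^ 2 / ε)) * s ^ ℓ * (s ^ ℓ * (s⁻¹) ^ ℓ) := by
                rw [h2]; ring
            _ = (x * s * Real.exp (x ^ 2 / ε)) * s ^ ℓ := by rw [hinv, mul_one]
  refine Summable.of_nonneg_of_le (fun ℓ => abs_nonneg _) key ?_
  exact (summable_geometric_of_lt_one hs0.le hs1).mul_left _
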